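/- Let α, β ∈ ℂ with α ≠ β, and let γ : [0,1] → ℂ, γ(t) = α + t(β − α) be the segment from α to β. Let f : ℂ → ℂ be entire with f'(z) ≠ 0 for all z with f(z) ∈ γ([0,1]). If z₁ ≠ z₂ satisfy f(z₁) = f(z₂) = α, and γ₁, γ₂ : [0,1] → ℂ are continuous lifts through f (f ∘ γᵢ = γ, γᵢ(0) = zᵢ), then γ₁([0,1]) ∩ γ₂([0,1]) = ∅. -/

import Mathlib

open Set

/-- Local injectivity of an entire function at a noncritical point. -/
lemma locInj (f : ℂ → ℂ) (hf : Differentiable ℂ f) (w : ℂ) (hw : deriv f w ≠ 0) :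
    ∃ U : Set ℂ, IsOpen U ∧ w ∈ U ∧ Set.InjOn f U := by
  obtain ⟨p, hp⟩ := hf.analyticAt w
  have hs : HasStrictDerivAt f (deriv f w) w := by
    have h := hp.hasStrictDerivAt
    rwa [← h.hasDerivAt.deriv] at h
  have he := hs.hasStrictFDerivAt_equiv hw
  refine ⟨(he.toOpenPartialHomeomorph f).source, (he.toOpenPartialHomeomorph f).open_source,
    he.mem_toOpenPartialHomeomorph_source, ?_⟩
  have := (he.toOpenPartialHomeomorph f).injOn
  rwa [he.toOpenPartialHomeomorph_coe] at this

/-- Lifts through `f` of the segment from `α` to `β`, starting at two distinct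
preimages of `α`, have disjoint images when `f` has no critical points over
the segment. -/
theorem segment_lifts_disjoint (α β : ℂ) (hab : α ≠ β)
    (f : ℂ → ℂ) (hf : Differentiable ℂ f)
    (hcrit : ∀ z : ℂ, f z ∈ (fun t : ℝ => α + (t : ℂ) * (β - α)) '' Set.Icc (0:ℝ) 1 →
      deriv f z ≠ 0)
    (z₁ z₂ : ℂ) (hz : z₁ ≠ z₂) (h₁ : f z₁ = α) (h₂ : f z₂ = α)
    (γ₁ γ₂ : ℝ → ℂ)
    (hγ₁c : ContinuousOn γ₁ (Set.Icc 0 1)) (hγ₂c : ContinuousOn γ₂ (Set.Icc 0 1))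
    (hlift₁ : ∀ t ∈ Set.Icc (0:ℝ) 1, f (γ₁ t) = α + (t : ℂ) * (β - α))
    (hlift₂ : ∀ t ∈ Set.Icc (0:ℝ) 1, f (γ₂ t) = α + (t : ℂ) * (β - α))
    (h0₁ : γ₁ 0 = z₁) (h0₂ : γ₂ 0 = z₂) :
    (γ₁ '' Set.Icc (0:ℝ) 1) ∩ (γ₂ '' Set.Icc (0:ℝ) 1) = ∅ := by
  by_contra h
  rw [← Set.not_nonempty_iff_eq_empty, not_not] at h
  obtain ⟨w, ⟨s, hs, hws⟩, ⟨t, ht, hwt⟩⟩ := h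
  -- from f(γ₁ s) = f(γ₂ t) deduce s = t
  have hst : s = t := by
    have h1 := hlift₁ s hs
    have h2 := hlift₂ t ht
    rw [hws] at h1; rw [hwt] at h2
    have : (s : ℂ) * (β - α) = (t : ℂ) * (β - α) := by
      have := h1.symm.trans h2
      linear_combination this
    have hba : (β - α) ≠ 0 := sub_ne_zero.mpr hab.symm
    have := mul_right_cancel₀ hba this
    exact_mod_cast this
  subst hst
  -- work in the subtype
  haveI : PreconnectedSpace (Icc (0:ℝ) 1) := Subtype.preconnectedSpace isPreconnected_Icc
  set S : Set (Icc (0:ℝ) 1) := {u | γ₁ u = γ₂ u} with hS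
  have hc1 : Continuous fun u : Icc (0:ℝ) 1 => γ₁ u := hγ₁c.restrict
  have hc2 : Continuous fun u : Icc (0:ℝ) 1 => γ₂ u := hγ₂c.restrict
  have hclosed : IsClosed S := isClosed_eq hc1 hc2
  have hopen : IsOpen S := by
    rw [isOpen_iff_mem_nhds]
    rintro u hu
    have huI : (u : ℝ) ∈ Icc (0:ℝ) 1 := u.2
    have hder : deriv f (γ₁ u) ≠ 0 := by
      apply hcrit
      exact ⟨u, huI, (hlift₁ u huI).symm⟩
    obtain ⟨U, hUo, hwU, hinj⟩ := locInj f hf (γ₁ u) hder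
    have hU1 : (fun v : Icc (0:ℝ) 1 => γ₁ v) ⁻¹' U ∈ nhds u :=
      hc1.continuousAt.preimage_mem_nhds (hUo.mem_nhds hwU)
    have hwU2 : γ₂ u ∈ U := by rw [← hu]; exact hwU
    have hU2 : (fun v : Icc (0:ℝ) 1 => γ₂ v) ⁻¹' U ∈ nhds u :=
      hc2.continuousAt.preimage_mem_nhds (hUo.mem_nhds hwU2)
    filter_upwards [hU1, hU2] with v hv1 hv2
    exact hinj hv1 hv2 ((hlift₁ v v.2).trans (hlift₂ v v.2).symm)
  have hne : S.Nonempty := ⟨⟨s, hs⟩, hws.trans hwt.symm⟩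
  have : S = univ := IsClopen.eq_univ ⟨hclosed, hopen⟩ hne
  have h0 : (⟨0, by norm_num⟩ : Icc (0:ℝ) 1) ∈ S := this ▸ mem_univ _
  exact hz (h0₁ ▸ h0₂ ▸ h0)
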